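/- Given two vertices v, w of a graph G and a natural number k, there are only finitely many distinct vertex sets S with |S| ≤ k that separate v from w minimally. -/

import Mathlib

namespace Paper

variable {V : Type*} {ι : Type*}

def edgeVerts (X : Set (Sym2 V)) : Set V := {v | ∃ e ∈ X, v ∈ e}

def ecompl (G : SimpleGraph V) (X : Set (Sym2 V)) : Set (Sym2 V) := G.edgeSet \ X

def bdry (G : SimpleGraph V) (X : Set (Sym2 V)) : Set V :=
  {v | (∃ e ∈ X, v ∈ e) ∧ ∃ e ∈ ecompl G X, v ∈ e}

def Nested (G : SimpleGraph V) (X Y : Set (Sym2 V)) : Prop :=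
  X ⊆ Y ∨ ecompl G X ⊆ Y ∨ Y ⊆ X ∨ Y ⊆ ecompl G X

def ReachOutside (G : SimpleGraph V) (S : Set V) (u v : V) : Prop :=
  ∃ p : G.Walk u v, ∀ x ∈ p.support, x ∉ S

def IsCompOutside (G : SimpleGraph V) (S : Set V) (C : Set V) : Prop :=
  ∃ v, v ∉ S ∧ C = {u | ReachOutside G S u v}

def sEdges (G : SimpleGraph V) (C : Set V) : Set (Sym2 V) :=
  {e | e ∈ G.edgeSet ∧ ∃ v ∈ C, v ∈ e}

def IsRay (G : SimpleGraph V) (f : ℕ → V) : Prop :=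
  Function.Injective f ∧ ∀ n, G.Adj (f n) (f (n + 1))

def RayEquiv (G : SimpleGraph V) (f g : ℕ → V) : Prop :=
  ∀ S : Set V, S.Finite → ∃ N, ∀ i ≥ N, ∀ j ≥ N, ReachOutside G S (f i) (g j)

def LivesIn (f : ℕ → V) (X : Set (Sym2 V)) : Prop :=
  ∃ N, ∀ n ≥ N, f n ∈ edgeVerts X

def Dominates (G : SimpleGraph V) (v : V) (f : ℕ → V) : Prop :=
  ∃ (g : ℕ → ℕ) (p : (k : ℕ) → G.Walk v (f (g k))),
    StrictMono g ∧ (∀ k, (p k).IsPath) ∧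
    ∀ k l, k ≠ l → ∀ x, x ∈ (p k).support → x ∈ (p l).support → x = v


private lemma delP_not_mem_support {V : Type*} {G : SimpleGraph V} {p a b : V}
    (q : (G.deleteEdges {e : Sym2 V | p ∈ e}).Walk a b) (ha : a ≠ p) : p ∉ q.support := by
  induction q with
  | nil => simpa using fun h => ha h.symm
  | @cons a c b h q ih =>
      rw [SimpleGraph.Walk.support_cons, List.mem_cons]
      rw [SimpleGraph.deleteEdges_adj, Set.mem_setOf_eq, Sym2.mem_iff] at h
      push_neg
      exact ⟨fun hpa => h.2 (Or.inl hpa), ih (fun hc => h.2 (Or.inr hc.symm))⟩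

theorem stmt4 (G : SimpleGraph V) (v w : V) (k : ℕ) :
    {S : Set V | S.Finite ∧ S.ncard ≤ k ∧ v ∉ S ∧ w ∉ S ∧
      ¬ ReachOutside G S v w ∧
      ∀ s ∈ S, (∃ u, G.Adj s u ∧ ReachOutside G S u v) ∧
               (∃ u, G.Adj s u ∧ ReachOutside G S u w)}.Finite := by
  induction k generalizing G with
  | zero =>
      apply Set.Finite.subset (Set.finite_singleton (∅ : Set V))
      rintro S ⟨hfin, hcard, -⟩
      simpa using (Set.ncard_eq_zero hfin).mp (Nat.le_zero.mp hcard)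
  | succ k ih =>
      by_cases hconn : Nonempty (G.Walk v w)
      · obtain ⟨P⟩ := hconn
        apply Set.Finite.subset
          (Set.Finite.biUnion (P.support.finite_toSet) (fun p _ =>
            Set.Finite.image (Set.insert p)
              (ih (G.deleteEdges {e : Sym2 V | p ∈ e}))))
        rintro S ⟨hfin, hcard, hv, hw, hsep, hmin⟩
        -- S meets P.support
        have hmeet : ∃ p ∈ P.support, p ∈ S := by
          by_contra hc
          push_neg at hc
          exact hsep ⟨P, hc⟩
        obtain ⟨p, hpP, hpS⟩ := hmeet
        set G' := G.deleteEdges {e : Sym2 V | p ∈ e} with hG'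
        -- transfer a G-walk avoiding S to G'
        have key : ∀ (a b : V), ReachOutside G S a b →
            ReachOutside G' (S \ {p}) a b := by
          rintro a b ⟨q, hq⟩
          refine ⟨q.toDeleteEdges _ ?_, ?_⟩
          · intro e he hpe
            induction e with
            | h x y =>
              rcases Sym2.mem_iff.mp hpe with rfl | rfl
              · exact hq _ (q.fst_mem_support_of_mem_edges he) hpS
              · exact hq _ (q.snd_mem_support_of_mem_edges he) hpS
          · intro x hx
            rw [SimpleGraph.Walk.support_transfer] at hx
            exact fun hxS => hq x hx hxS.1
        refine Set.mem_biUnion hpP ⟨S \ {p}, ⟨hfin.diff, ?_, ?_, ?_, ?_, ?_⟩, ?_⟩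
        · have := Set.ncard_diff_singleton_add_one hpS hfin
          omega
        · exact fun h => hv h.1
        · exact fun h => hw h.1
        · rintro ⟨q, hq⟩
          have hp' : p ∉ q.support := delP_not_mem_support q (fun h => hv (h ▸ hpS))
          refine hsep ⟨q.transfer G (fun e he =>
            (SimpleGraph.edgeSet_deleteEdges _ ▸ q.edges_subset_edgeSet he).1), ?_⟩
          intro x hx
          rw [SimpleGraph.Walk.support_transfer] at hx
          intro hxS
          rcases eq_or_ne x p with rfl | hxp
          · exact hp' hx
          · exact hq x hx ⟨hxS, hxp⟩
        · rintro s ⟨hsS, hsp⟩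
          obtain ⟨⟨u₁, hadj₁, hr₁⟩, ⟨u₂, hadj₂, hr₂⟩⟩ := hmin s hsS
          have hu₁ : u₁ ∉ S := fun h => hr₁.choose_spec _ hr₁.choose.start_mem_support h
          have hu₂ : u₂ ∉ S := fun h => hr₂.choose_spec _ hr₂.choose.start_mem_support h
          constructor
          · refine ⟨u₁, ?_, key _ _ hr₁⟩
            rw [SimpleGraph.deleteEdges_adj]
            refine ⟨hadj₁, ?_⟩
            simp only [Set.mem_setOf_eq, Sym2.mem_iff]
            rintro (rfl | rfl)
            · exact hsp rfl
            · exact hu₁ hpS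
          · refine ⟨u₂, ?_, key _ _ hr₂⟩
            rw [SimpleGraph.deleteEdges_adj]
            refine ⟨hadj₂, ?_⟩
            simp only [Set.mem_setOf_eq, Sym2.mem_iff]
            rintro (rfl | rfl)
            · exact hsp rfl
            · exact hu₂ hpS
        · show insert p (S \ {p}) = S
          rw [Set.insert_diff_singleton, Set.insert_eq_of_mem hpS]
      · apply Set.Finite.subset (Set.finite_singleton (∅ : Set V))
        rintro S ⟨hfin, hcard, hv, hw, hsep, hmin⟩
        simp only [Set.mem_singleton_iff]
        by_contra hS
        obtain ⟨s, hs⟩ := Set.nonempty_iff_ne_empty.mpr hS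
        obtain ⟨⟨u₁, hadj₁, q₁, -⟩, ⟨u₂, hadj₂, q₂, -⟩⟩ := hmin s hs
        exact hconn ⟨(q₁.reverse.append (SimpleGraph.Walk.cons hadj₁.symm
          (SimpleGraph.Walk.cons hadj₂ q₂)))⟩


end Paper
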